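/- Let 0 < α ≤ 1 and ε > 0, let S be a nonempty bundle of Fin m, and let v₂ ∈ V₂ be a normalized monotone valuation. Define the single-minded valuations u by u(X) = (1/α)·v₂(Fin m) − v₂(Sᶜ) + ε if S ⊆ X and 0 otherwise, and l by l(X) = max{α·v₂(Fin m) − v₂(Sᶜ) − ε, 0} if S ⊆ X and 0 otherwise, and suppose u, l ∈ V₁. Let (f, p₁, p₂) be a truthful two-bidder auction rule over V₁ × V₂ that gives an α-approximation to the optimal welfare, and suppose M : Finset (Fin m) → ℝ is nondecreasing and is a menu for bidder 1 at v₂. Then (1/α)·v₂(Fin m) − v₂(Sᶜ) + ε ≥ M(S) − M(∅) ≥ α·v₂(Fin m) − v₂(Sᶜ) − ε. -/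
import Mathlib


/-- Bounds on the menu prices of any truthful two-bidder `α`-approximation mechanism whose
class for bidder 1 contains the single-minded valuations `u` and `l` built from `v₂`. -/
theorem menu_price_bounds
    (m : ℕ) (α ε : ℝ) (hα0 : 0 < α) (hα1 : α ≤ 1) (hε : 0 < ε)
    (S : Finset (Fin m)) (hS : S.Nonempty)
    (V₁ V₂ : Set (Finset (Fin m) → ℝ))
    (v₂ : Finset (Fin m) → ℝ) (hv₂ : v₂ ∈ V₂)
    (hv₂norm : v₂ ∅ = 0) (hv₂mono : ∀ X Y : Finset (Fin m), X ⊆ Y → v₂ X ≤ v₂ Y)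
    (u l : Finset (Fin m) → ℝ)
    (hu : ∀ X : Finset (Fin m),
      u X = if S ⊆ X then 1 / α * v₂ (Finset.univ : Finset (Fin m)) - v₂ Sᶜ + ε else 0)
    (hl : ∀ X : Finset (Fin m),
      l X = if S ⊆ X then
        max (α * v₂ (Finset.univ : Finset (Fin m)) - v₂ Sᶜ - ε) 0 else 0)
    (huV : u ∈ V₁) (hlV : l ∈ V₁)
    (f : (Finset (Fin m) → ℝ) → (Finset (Fin m) → ℝ) → Finset (Fin m) × Finset (Fin m))
    (p₁ p₂ : (Finset (Fin m) → ℝ) → (Finset (Fin m) → ℝ) → ℝ)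
    (hdisj : ∀ w₁ ∈ V₁, ∀ w₂ ∈ V₂, Disjoint (f w₁ w₂).1 (f w₁ w₂).2)
    (htruth₁ : ∀ w₁ ∈ V₁, ∀ w₂ ∈ V₂, ∀ w₁' ∈ V₁,
      w₁ (f w₁ w₂).1 - p₁ w₁ w₂ ≥ w₁ (f w₁' w₂).1 - p₁ w₁' w₂)
    (htruth₂ : ∀ w₁ ∈ V₁, ∀ w₂ ∈ V₂, ∀ w₂' ∈ V₂,
      w₂ (f w₁ w₂).2 - p₂ w₁ w₂ ≥ w₂ (f w₁ w₂').2 - p₂ w₁ w₂')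
    (happrox : ∀ w₁ ∈ V₁, ∀ w₂ ∈ V₂, ∀ A B : Finset (Fin m), Disjoint A B →
      α * (w₁ A + w₂ B) ≤ w₁ (f w₁ w₂).1 + w₂ (f w₁ w₂).2)
    (M : Finset (Fin m) → ℝ)
    (hMmono : ∀ X Y : Finset (Fin m), X ⊆ Y → M X ≤ M Y)
    (hmenu : ∀ w₁ ∈ V₁, p₁ w₁ v₂ = M (f w₁ v₂).1 ∧
      ∀ X : Finset (Fin m), w₁ (f w₁ v₂).1 - M (f w₁ v₂).1 ≥ w₁ X - M X) :
    M S - M ∅ ≤ 1 / α * v₂ (Finset.univ : Finset (Fin m)) - v₂ Sᶜ + ε ∧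
    α * v₂ (Finset.univ : Finset (Fin m)) - v₂ Sᶜ - ε ≤ M S - M ∅ := by
  have hSne : ¬ S ⊆ (∅ : Finset (Fin m)) := by
    simpa [Finset.subset_empty] using hS.ne_empty
  have hαne : α ≠ 0 := ne_of_gt hα0
  have hinv : α * (1 / α) = 1 := by field_simp
  constructor
  · -- upper bound
    obtain ⟨hp, hmen⟩ := hmenu u huV
    by_cases hSA : S ⊆ (f u v₂).1
    · have h1 := hmen ∅
      have huA : u (f u v₂).1 = 1 / α * v₂ Finset.univ - v₂ Sᶜ + ε := by
        rw [hu]; simp [hSA]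
      have hu0 : u ∅ = 0 := by rw [hu]; simp [hSne]
      have hMA : M S ≤ M (f u v₂).1 := hMmono _ _ hSA
      linarith
    · exfalso
      have happ := happrox u huV v₂ hv₂ S Sᶜ disjoint_compl_right
      have huA : u (f u v₂).1 = 0 := by rw [hu]; simp [hSA]
      have huS : u S = 1 / α * v₂ Finset.univ - v₂ Sᶜ + ε := by
        rw [hu]; simp
      have hB : v₂ (f u v₂).2 ≤ v₂ Finset.univ :=
        hv₂mono _ _ (Finset.subset_univ _)
      have key : α * (1 / α * v₂ Finset.univ - v₂ Sᶜ + ε + v₂ Sᶜ)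
          = v₂ Finset.univ + α * ε := by
        field_simp; ring
      rw [huA, huS, key] at happ
      nlinarith
  · -- lower bound
    by_contra hcon
    push_neg at hcon
    have hM0 : M ∅ ≤ M S := hMmono _ _ (Finset.empty_subset _)
    have hpos : 0 < α * v₂ Finset.univ - v₂ Sᶜ - ε := by linarith
    have hlS : l S = α * v₂ Finset.univ - v₂ Sᶜ - ε := by
      rw [hl]; simp [le_of_lt hpos]
    obtain ⟨hp, hmen⟩ := hmenu l hlV
    by_cases hSA : S ⊆ (f l v₂).1
    · have hB : (f l v₂).2 ⊆ Sᶜ := by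
        have hd : Disjoint S (f l v₂).2 :=
          ((hdisj l hlV v₂ hv₂).mono_left hSA).symm.symm
        intro x hx
        simp only [Finset.mem_compl]
        intro hxS
        exact (Finset.disjoint_left.mp ((hdisj l hlV v₂ hv₂).mono_left hSA)) hxS hx
      have hvB : v₂ (f l v₂).2 ≤ v₂ Sᶜ := hv₂mono _ _ hB
      have happ := happrox l hlV v₂ hv₂ ∅ Finset.univ
        (Finset.disjoint_left.mpr (by simp))
      have hl0 : l ∅ = 0 := by rw [hl]; simp [hSne]
      have hlA : l (f l v₂).1 = α * v₂ Finset.univ - v₂ Sᶜ - ε := by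
        rw [hl]; simp [hSA, le_of_lt hpos]
      rw [hl0, hlA] at happ
      linarith
    · have h1 := hmen S
      have hlA : l (f l v₂).1 = 0 := by rw [hl]; simp [hSA]
      have hMA : M ∅ ≤ M (f l v₂).1 := hMmono _ _ (Finset.empty_subset _)
      rw [hlA, hlS] at h1
      linarith
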